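/- (Defining sets have size at most four.) For every finite set P ⊆ U and every tile f ∈ QT(P), there exists a subset X ⊆ P with |X| ≤ 4 such that f is a tile of QT(X). -/
import Mathlib


/-- The unit square `U = [0,1) × [0,1)`. -/
def unitSq : Set (ℝ × ℝ) := Set.Ico (0 : ℝ) 1 ×ˢ Set.Ico (0 : ℝ) 1

/-- The square `[i/2^k, (i+1)/2^k) × [j/2^k, (j+1)/2^k)`. -/
def canSq (k : ℕ) (i j : ℤ) : Set (ℝ × ℝ) :=
  Set.Ico ((i : ℝ) / 2 ^ k) (((i : ℝ) + 1) / 2 ^ k) ×ˢ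
    Set.Ico ((j : ℝ) / 2 ^ k) (((j : ℝ) + 1) / 2 ^ k)

/-- `σ` is a canonical square of side length `2⁻ᵏ`: it has the form
`[i/2^k, (i+1)/2^k) × [j/2^k, (j+1)/2^k)` with `0 ≤ i, j < 2^k`
(so it is contained in the unit square). -/
def IsCanSqSide (k : ℕ) (σ : Set (ℝ × ℝ)) : Prop :=
  ∃ i j : ℤ, 0 ≤ i ∧ i < 2 ^ k ∧ 0 ≤ j ∧ j < 2 ^ k ∧ σ = canSq k i j

/-- `σ` is a canonical square. -/
def IsCanSq (σ : Set (ℝ × ℝ)) : Prop := ∃ k : ℕ, IsCanSqSide k σ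

/-- `q` is one of the four quadrants of the canonical square `σ`: if `σ` has side
length `2⁻ᵏ`, the quadrants are the canonical squares of side length `2⁻⁽ᵏ⁺¹⁾`
contained in `σ`. -/
def IsQuadrantOf (q σ : Set (ℝ × ℝ)) : Prop :=
  ∃ k : ℕ, IsCanSqSide k σ ∧ IsCanSqSide (k + 1) q ∧ q ⊆ σ

/-- `σ` is the smallest canonical square containing `S`: it is a canonical square,
it contains `S`, and it is contained in every canonical square containing `S`. -/
def IsSmallestCanSq (S σ : Set (ℝ × ℝ)) : Prop :=
  IsCanSq σ ∧ S ⊆ σ ∧ ∀ τ : Set (ℝ × ℝ), IsCanSq τ → S ⊆ τ → σ ⊆ τ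

open scoped Classical

/-- `smallestCanSq S`: the smallest canonical square containing `S` (junk value `∅` if none exists). -/
noncomputable def smallestCanSq (S : Set (ℝ × ℝ)) : Set (ℝ × ℝ) :=
  if h : ∃ σ : Set (ℝ × ℝ), IsSmallestCanSq S σ then h.choose else ∅

/-- A canonical square `σ` is critical for `P` if at least two of its four
quadrants contain a point of `P`. -/
def Critical (P σ : Set (ℝ × ℝ)) : Prop :=
  IsCanSq σ ∧ ∃ q₁ q₂ : Set (ℝ × ℝ), IsQuadrantOf q₁ σ ∧ IsQuadrantOf q₂ σ ∧
    q₁ ≠ q₂ ∧ (P ∩ q₁).Nonempty ∧ (P ∩ q₂).Nonempty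

/-- The tiles of the compressed quadtree map `QT(P)`: (i) `U` itself if `|P| ≤ 1`;
(ii) the annulus `U \ sq(P)` if `|P| ≥ 2` and `sq(P) ≠ U`; (iii) for every
canonical square `σ` critical for `P` and every quadrant `q` of `σ`: the square
`q` if `|P ∩ q| ≤ 1`, and the annulus `q \ sq(P ∩ q)` if `|P ∩ q| ≥ 2` and
`sq(P ∩ q) ≠ q`. -/
noncomputable def QT (P : Set (ℝ × ℝ)) : Set (Set (ℝ × ℝ)) :=
  {f | (P.ncard ≤ 1 ∧ f = unitSq)
    ∨ (2 ≤ P.ncard ∧ smallestCanSq P ≠ unitSq ∧ f = unitSq \ smallestCanSq P)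
    ∨ (∃ σ q : Set (ℝ × ℝ), Critical P σ ∧ IsQuadrantOf q σ ∧
        (((P ∩ q).ncard ≤ 1 ∧ f = q)
          ∨ (2 ≤ (P ∩ q).ncard ∧ smallestCanSq (P ∩ q) ≠ q ∧ f = q \ smallestCanSq (P ∩ q))))}

section Aux

open Set

lemma dyadic_Ico_subset {k l : ℕ} {i m : ℤ} (hkl : l ≤ k)
    (hne : (Set.Ico ((i:ℝ)/2^k) (((i:ℝ)+1)/2^k) ∩
      Set.Ico ((m:ℝ)/2^l) (((m:ℝ)+1)/2^l)).Nonempty) :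
    Set.Ico ((i:ℝ)/2^k) (((i:ℝ)+1)/2^k) ⊆ Set.Ico ((m:ℝ)/2^l) (((m:ℝ)+1)/2^l) := by
  obtain ⟨x, ⟨hx1, hx2⟩, hx3, hx4⟩ := hne
  have hk : (0:ℝ) < 2^k := by positivity
  have hl : (0:ℝ) < 2^l := by positivity
  have hc : (0:ℝ) < 2^(k-l) := by positivity
  have hpow : (2:ℝ)^k = 2^l * 2^(k-l) := by
    rw [← pow_add]; congr 1; omega
  have h1 : (i:ℝ) < ((m:ℝ)+1) * 2^(k-l) := by
    have h : (i:ℝ)/2^k < ((m:ℝ)+1)/2^l := lt_of_le_of_lt hx1 hx4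
    rw [div_lt_div_iff₀ hk hl] at h
    rw [hpow] at h
    nlinarith
  have h2 : (m:ℝ) * 2^(k-l) < (i:ℝ) + 1 := by
    have h : (m:ℝ)/2^l < ((i:ℝ)+1)/2^k := lt_of_le_of_lt hx3 hx2
    rw [div_lt_div_iff₀ hl hk] at h
    rw [hpow] at h
    nlinarith
  have h1' : (i:ℤ) + 1 ≤ ((m:ℤ)+1) * 2^(k-l) := by
    have : (i:ℤ) < ((m:ℤ)+1) * 2^(k-l) := by exact_mod_cast h1
    omega
  have h2' : (m:ℤ) * 2^(k-l) ≤ (i:ℤ) := by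
    have : (m:ℤ) * 2^(k-l) < (i:ℤ) + 1 := by exact_mod_cast h2
    omega
  have h1r : ((i:ℝ) + 1) ≤ ((m:ℝ)+1) * 2^(k-l) := by exact_mod_cast h1'
  have h2r : (m:ℝ) * 2^(k-l) ≤ (i:ℝ) := by exact_mod_cast h2'
  intro y ⟨hy1, hy2⟩
  constructor
  · rw [div_le_iff₀ hl]
    have h : (i:ℝ)/2^k ≤ y := hy1
    rw [div_le_iff₀ hk] at h
    have key : (m:ℝ) * 2^(k-l) ≤ y * 2^l * 2^(k-l) := by
      calc (m:ℝ) * 2^(k-l) ≤ i := h2r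
        _ ≤ y * 2^k := h
        _ = y * 2^l * 2^(k-l) := by rw [hpow]; ring
    exact le_of_mul_le_mul_right key hc
  · rw [lt_div_iff₀ hl]
    have h : y < ((i:ℝ)+1)/2^k := hy2
    rw [lt_div_iff₀ hk] at h
    have key : y * 2^l * 2^(k-l) < ((m:ℝ)+1) * 2^(k-l) := by
      calc y * 2^l * 2^(k-l) = y * 2^k := by rw [hpow]; ring
        _ < (i:ℝ) + 1 := h
        _ ≤ ((m:ℝ)+1) * 2^(k-l) := h1r
    exact lt_of_mul_lt_mul_right key hc.le

lemma canSq_subset_canSq {k l : ℕ} {i j m n : ℤ} (hkl : l ≤ k)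
    (hne : (canSq k i j ∩ canSq l m n).Nonempty) :
    canSq k i j ⊆ canSq l m n := by
  obtain ⟨x, hx, hx'⟩ := hne
  obtain ⟨hx1, hx2⟩ := hx
  obtain ⟨hx1', hx2'⟩ := hx'
  intro y ⟨hy1, hy2⟩
  exact ⟨dyadic_Ico_subset hkl ⟨x.1, hx1, hx1'⟩ hy1,
    dyadic_Ico_subset hkl ⟨x.2, hx2, hx2'⟩ hy2⟩

lemma IsCanSqSide.subset_of_le {k l : ℕ} {σ τ : Set (ℝ × ℝ)} (hkl : l ≤ k)
    (hσ : IsCanSqSide k σ) (hτ : IsCanSqSide l τ) (hne : (σ ∩ τ).Nonempty) :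
    σ ⊆ τ := by
  obtain ⟨i, j, _, _, _, _, rfl⟩ := hσ
  obtain ⟨m, n, _, _, _, _, rfl⟩ := hτ
  exact canSq_subset_canSq hkl hne

lemma IsCanSqSide.eq_of_same {k : ℕ} {σ τ : Set (ℝ × ℝ)}
    (hσ : IsCanSqSide k σ) (hτ : IsCanSqSide k τ) (hne : (σ ∩ τ).Nonempty) :
    σ = τ :=
  Set.Subset.antisymm (hσ.subset_of_le le_rfl hτ hne)
    (hτ.subset_of_le le_rfl hσ ⟨hne.choose, hne.choose_spec.2, hne.choose_spec.1⟩)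

lemma IsCanSqSide.fst_diff_lt {l : ℕ} {τ : Set (ℝ × ℝ)} (hτ : IsCanSqSide l τ)
    {x y : ℝ × ℝ} (hx : x ∈ τ) (hy : y ∈ τ) : x.1 - y.1 < 1/2^l := by
  obtain ⟨m, n, _, _, _, _, rfl⟩ := hτ
  obtain ⟨⟨hx1, hx2⟩, -⟩ := hx
  obtain ⟨⟨hy1, hy2⟩, -⟩ := hy
  have hl : (0:ℝ) < 2^l := by positivity
  rw [div_le_iff₀ hl] at hy1
  rw [lt_div_iff₀ hl] at hx2
  rw [lt_div_iff₀ hl, sub_mul]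
  linarith

lemma IsCanSqSide.snd_diff_lt {l : ℕ} {τ : Set (ℝ × ℝ)} (hτ : IsCanSqSide l τ)
    {x y : ℝ × ℝ} (hx : x ∈ τ) (hy : y ∈ τ) : x.2 - y.2 < 1/2^l := by
  obtain ⟨m, n, _, _, _, _, rfl⟩ := hτ
  obtain ⟨-, hx1, hx2⟩ := hx
  obtain ⟨-, hy1, hy2⟩ := hy
  have hl : (0:ℝ) < 2^l := by positivity
  rw [div_le_iff₀ hl] at hy1
  rw [lt_div_iff₀ hl] at hx2
  rw [lt_div_iff₀ hl, sub_mul]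
  linarith

lemma IsCanSqSide.level_eq {k l : ℕ} {σ : Set (ℝ × ℝ)}
    (hk : IsCanSqSide k σ) (hl : IsCanSqSide l σ) : k = l := by
  by_contra hne
  wlog h : k < l generalizing k l
  · exact this hl hk (Ne.symm hne) (by omega)
  obtain ⟨i, j, hi0, hi1, hj0, hj1, rfl⟩ := hk
  have hkpos : (0:ℝ) < 2^k := by positivity
  have hlpos : (0:ℝ) < 2^l := by positivity
  have hlk : (1:ℝ)/2^l < 1/2^k := by
    apply div_lt_div_of_pos_left one_pos hkpos
    exact pow_lt_pow_right₀ one_lt_two h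
  have hmem : ∀ t : ℝ, 0 ≤ t → t < 1/2^k →
      ((i:ℝ)/2^k + t, (j:ℝ)/2^k) ∈ canSq k i j := by
    intro t ht0 ht1
    refine ⟨⟨by linarith, ?_⟩, le_refl _, ?_⟩
    · have : ((i:ℝ)+1)/2^k = (i:ℝ)/2^k + 1/2^k := by ring
      rw [this]; linarith
    · have hpos : (0:ℝ) < 1/2^k := by positivity
      have : ((j:ℝ)+1)/2^k = (j:ℝ)/2^k + 1/2^k := by ring
      rw [this]; linarith
  have ha := hmem 0 le_rfl (by positivity)
  have hb := hmem (1/2^l) (by positivity) hlk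
  have := hl.fst_diff_lt hb ha
  simp at this

lemma canSq_subset_unitSq {k : ℕ} {i j : ℤ} (hi0 : 0 ≤ i) (hi1 : i < 2^k)
    (hj0 : 0 ≤ j) (hj1 : j < 2^k) : canSq k i j ⊆ unitSq := by
  have hk : (0:ℝ) < 2^k := by positivity
  intro x ⟨⟨hx1, hx2⟩, hx3, hx4⟩
  have hik : ((i:ℝ)+1)/2^k ≤ 1 := by
    rw [div_le_one hk]
    have : (i:ℝ) + 1 ≤ (2:ℝ)^k := by exact_mod_cast (by omega : i + 1 ≤ (2:ℤ)^k)
    linarith [this]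
  have hjk : ((j:ℝ)+1)/2^k ≤ 1 := by
    rw [div_le_one hk]
    have : (j:ℝ) + 1 ≤ (2:ℝ)^k := by exact_mod_cast (by omega : j + 1 ≤ (2:ℤ)^k)
    linarith [this]
  have hi0' : (0:ℝ) ≤ (i:ℝ)/2^k := by positivity
  have hj0' : (0:ℝ) ≤ (j:ℝ)/2^k := by positivity
  exact ⟨⟨le_trans hi0' hx1, lt_of_lt_of_le hx2 hik⟩,
    ⟨le_trans hj0' hx3, lt_of_lt_of_le hx4 hjk⟩⟩

lemma IsCanSqSide.subset_unitSq {k : ℕ} {σ : Set (ℝ × ℝ)} (hσ : IsCanSqSide k σ) :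
    σ ⊆ unitSq := by
  obtain ⟨i, j, hi0, hi1, hj0, hj1, rfl⟩ := hσ
  exact canSq_subset_unitSq hi0 hi1 hj0 hj1

lemma unitSq_eq_canSq : unitSq = canSq 0 0 0 := by
  unfold unitSq canSq
  norm_num

lemma isCanSqSide_unitSq : IsCanSqSide 0 unitSq :=
  ⟨0, 0, le_rfl, by norm_num, le_rfl, by norm_num, unitSq_eq_canSq⟩

lemma floor_mem_Ico {t : ℝ} (n : ℕ) (h0 : 0 ≤ t) (h1 : t < 1) :
    (0 ≤ ⌊t * 2^n⌋ ∧ ⌊t * 2^n⌋ < 2^n) ∧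
    t ∈ Set.Ico ((⌊t * 2^n⌋ : ℝ)/2^n) (((⌊t * 2^n⌋ : ℝ) + 1)/2^n) := by
  have hn : (0:ℝ) < 2^n := by positivity
  constructor
  · constructor
    · exact Int.floor_nonneg.2 (by positivity)
    · rw [Int.floor_lt]
      push_cast
      calc t * 2^n < 1 * 2^n := by apply mul_lt_mul_of_pos_right h1 hn
        _ = 2^n := one_mul _
  · constructor
    · rw [div_le_iff₀ hn]
      exact Int.floor_le _
    · rw [lt_div_iff₀ hn]
      exact Int.lt_floor_add_one _

/-- Every point of the unit square lies in a canonical square of any given level. -/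
lemma exists_canSqSide_mem (n : ℕ) {x : ℝ × ℝ} (hx : x ∈ unitSq) :
    ∃ q, IsCanSqSide n q ∧ x ∈ q := by
  obtain ⟨⟨hx1, hx2⟩, hx3, hx4⟩ := hx
  obtain ⟨⟨ha0, ha1⟩, ha⟩ := floor_mem_Ico n hx1 hx2
  obtain ⟨⟨hb0, hb1⟩, hb⟩ := floor_mem_Ico n hx3 hx4
  refine ⟨canSq n ⌊x.1 * 2^n⌋ ⌊x.2 * 2^n⌋,
    ⟨⌊x.1 * 2^n⌋, ⌊x.2 * 2^n⌋, ha0, by exact_mod_cast ha1, hb0, by exact_mod_cast hb1, rfl⟩,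
    ha, hb⟩

lemma exists_quadrant_mem {k : ℕ} {σ : Set (ℝ × ℝ)} (hσ : IsCanSqSide k σ)
    {x : ℝ × ℝ} (hx : x ∈ σ) : ∃ q, IsQuadrantOf q σ ∧ x ∈ q := by
  have hxU : x ∈ unitSq := hσ.subset_unitSq hx
  obtain ⟨q, hq, hxq⟩ := exists_canSqSide_mem (k+1) hxU
  exact ⟨q, ⟨k, hσ, hq, hq.subset_of_le (by omega) hσ ⟨x, hxq, hx⟩⟩, hxq⟩

lemma IsQuadrantOf.eq_of_mem {σ q₁ q₂ : Set (ℝ × ℝ)} (h₁ : IsQuadrantOf q₁ σ)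
    (h₂ : IsQuadrantOf q₂ σ) (hne : (q₁ ∩ q₂).Nonempty) : q₁ = q₂ := by
  obtain ⟨k₁, hσ₁, hq₁, -⟩ := h₁
  obtain ⟨k₂, hσ₂, hq₂, -⟩ := h₂
  have : k₁ = k₂ := hσ₁.level_eq hσ₂
  subst this
  exact hq₁.eq_of_same hq₂ hne

lemma IsQuadrantOf.ne {σ q : Set (ℝ × ℝ)} (h : IsQuadrantOf q σ) : q ≠ σ := by
  obtain ⟨k, hσ, hq, -⟩ := h
  intro he
  rw [he] at hq
  have := hσ.level_eq hq
  omega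

/-- Existence of the smallest canonical square for a set with two distinct points. -/
lemma exists_isSmallestCanSq {S : Set (ℝ × ℝ)} (hSU : S ⊆ unitSq)
    {x y : ℝ × ℝ} (hx : x ∈ S) (hy : y ∈ S) (hxy : x ≠ y) :
    ∃ σ, IsSmallestCanSq S σ := by
  have hd : 0 < max |x.1 - y.1| |x.2 - y.2| := by
    rcases Prod.ext_iff.not.mp hxy with h
    push_neg at h
    by_cases h1 : x.1 = y.1
    · have h2 := h h1
      have : 0 < |x.2 - y.2| := abs_pos.2 (sub_ne_zero.2 h2)
      exact lt_max_of_lt_right this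
    · have : 0 < |x.1 - y.1| := abs_pos.2 (sub_ne_zero.2 h1)
      exact lt_max_of_lt_left this
  set d := max |x.1 - y.1| |x.2 - y.2| with hdef
  obtain ⟨N, hN⟩ := pow_unbounded_of_one_lt (1/d) (one_lt_two (α := ℝ))
  -- any level l canonical square containing S has l bounded
  have hbound : ∀ l : ℕ, ∀ τ, IsCanSqSide l τ → S ⊆ τ → l ≤ N := by
    intro l τ hτ hSτ
    have hdl : d < 1/2^l := by
      rcases max_cases |x.1 - y.1| |x.2 - y.2| with ⟨he, -⟩ | ⟨he, -⟩
      · rw [hdef, he]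
        rcases abs_cases (x.1 - y.1) with ⟨ha, -⟩ | ⟨ha, -⟩
        · rw [ha]; exact hτ.fst_diff_lt (hSτ hx) (hSτ hy)
        · rw [ha]; have := hτ.fst_diff_lt (hSτ hy) (hSτ hx); linarith
      · rw [hdef, he]
        rcases abs_cases (x.2 - y.2) with ⟨ha, -⟩ | ⟨ha, -⟩
        · rw [ha]; exact hτ.snd_diff_lt (hSτ hx) (hSτ hy)
        · rw [ha]; have := hτ.snd_diff_lt (hSτ hy) (hSτ hx); linarith
    have h2l : (2:ℝ)^l < 2^N := by
      have hl : (0:ℝ) < 2^l := by positivity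
      have : (2:ℝ)^l < 1/d := by
        rw [lt_div_iff₀ hd]
        rw [lt_div_iff₀ hl] at hdl
        linarith [mul_comm d ((2:ℝ)^l)]
      linarith
    exact le_of_lt ((pow_lt_pow_iff_right₀ (one_lt_two (α := ℝ))).mp h2l)
  set Q : ℕ → Prop := fun k => ∃ σ, IsCanSqSide k σ ∧ S ⊆ σ with hQ
  have hQ0 : Q 0 := ⟨unitSq, isCanSqSide_unitSq, hSU⟩
  set K := Nat.findGreatest Q N with hK
  have hQK : Q K := Nat.findGreatest_spec (Nat.zero_le N) hQ0
  obtain ⟨σ, hσ, hSσ⟩ := hQK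
  refine ⟨σ, ⟨K, hσ⟩, hSσ, ?_⟩
  intro τ ⟨l, hτ⟩ hSτ
  by_cases hlK : l ≤ K
  · exact hσ.subset_of_le hlK hτ ⟨x, hSσ hx, hSτ hx⟩
  · exfalso
    have : l ≤ K := Nat.le_findGreatest (hbound l τ hτ hSτ) ⟨τ, hτ, hSτ⟩
    omega

lemma IsSmallestCanSq.unique {S σ τ : Set (ℝ × ℝ)} (h₁ : IsSmallestCanSq S σ)
    (h₂ : IsSmallestCanSq S τ) : σ = τ :=
  Set.Subset.antisymm (h₁.2.2 τ h₂.1 h₂.2.1) (h₂.2.2 σ h₁.1 h₁.2.1)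

lemma smallestCanSq_eq {S σ : Set (ℝ × ℝ)} (h : IsSmallestCanSq S σ) :
    smallestCanSq S = σ := by
  have hex : ∃ τ, IsSmallestCanSq S τ := ⟨σ, h⟩
  rw [smallestCanSq, dif_pos hex]
  exact hex.choose_spec.unique h

/-- Extraction of a defining pair for the smallest canonical square. -/
lemma exists_defining_pair {S σ : Set (ℝ × ℝ)} (_hSU : S ⊆ unitSq)
    {x y : ℝ × ℝ} (hx : x ∈ S) (_hy : y ∈ S) (hxy : x ≠ y)
    (hσ : IsSmallestCanSq S σ) :
    ∃ a ∈ S, ∃ b ∈ S, a ≠ b ∧ IsSmallestCanSq {a, b} σ := by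
  obtain ⟨⟨k, hσk⟩, hSσ, hmin⟩ := hσ
  -- find two points of S in different quadrants of σ
  obtain ⟨q₀, hq₀, hxq₀⟩ := exists_quadrant_mem hσk (hSσ hx)
  by_cases hall : ∀ z ∈ S, z ∈ q₀
  · exfalso
    have hq₀' := hq₀
    obtain ⟨k', -, hq₀side, hq₀sub⟩ := hq₀'
    have : σ ⊆ q₀ := hmin q₀ ⟨k'+1, hq₀side⟩ hall
    exact IsQuadrantOf.ne hq₀ (Set.Subset.antisymm hq₀sub this)
  · push_neg at hall
    obtain ⟨b, hbS, hbq₀⟩ := hall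
    obtain ⟨q₁, hq₁, hbq₁⟩ := exists_quadrant_mem hσk (hSσ hbS)
    have hqne : q₀ ≠ q₁ := fun he => hbq₀ (he ▸ hbq₁)
    have hab : x ≠ b := fun he => hbq₀ (he ▸ hxq₀)
    refine ⟨x, hx, b, hbS, hab, ⟨k, hσk⟩, ?_, ?_⟩
    · intro z hz
      rcases hz with rfl | rfl
      · exact hSσ hx
      · exact hSσ hbS
    · intro τ ⟨l, hτ⟩ hpair
      have hxτ : x ∈ τ := hpair (Set.mem_insert _ _)
      have hbτ : b ∈ τ := hpair (Set.mem_insert_of_mem _ rfl)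
      by_cases hlk : l ≤ k
      · exact hσk.subset_of_le hlk hτ ⟨x, hSσ hx, hxτ⟩
      · exfalso
        obtain ⟨k₀, hσk₀, hq₀side, hq₀sub⟩ := hq₀
        obtain ⟨k₁, hσk₁, hq₁side, hq₁sub⟩ := hq₁
        have e₀ : k₀ = k := hσk₀.level_eq hσk
        have e₁ : k₁ = k := hσk₁.level_eq hσk
        subst e₀; subst e₁
        have hτq₀ : τ ⊆ q₀ := hτ.subset_of_le (by omega) hq₀side ⟨x, hxτ, hxq₀⟩
        exact hqne (hq₀side.eq_of_same hq₁side ⟨b, hτq₀ hbτ, hbq₁⟩)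

lemma IsSmallestCanSq.of_between {a b : ℝ × ℝ} {T σ : Set (ℝ × ℝ)}
    (h : IsSmallestCanSq {a, b} σ) (hab : {a, b} ⊆ T) (hTσ : T ⊆ σ) :
    IsSmallestCanSq T σ :=
  ⟨h.1, hTσ, fun τ hτ hTτ => h.2.2 τ hτ (hab.trans hTτ)⟩

end Aux

/-- Defining sets have size at most four: for every tile `f ∈ QT(P)` there is a
subset `X ⊆ P` with `|X| ≤ 4` such that `f` is a tile of `QT(X)`. -/
theorem QT_defining_set_le_four (P : Set (ℝ × ℝ)) (hfin : P.Finite)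
    (hPU : P ⊆ unitSq) (f : Set (ℝ × ℝ)) (hf : f ∈ QT P) :
    ∃ X : Set (ℝ × ℝ), X ⊆ P ∧ X.ncard ≤ 4 ∧ f ∈ QT X := by
  rcases hf with ⟨h1, rfl⟩ | ⟨h2, hne, rfl⟩ | ⟨σ, q, hcrit, hq, hsub⟩
  · exact ⟨P, subset_rfl, h1.trans (by norm_num), Or.inl ⟨h1, rfl⟩⟩
  · -- annulus at top level
    obtain ⟨x, hx, y, hy, hxy⟩ := (Set.one_lt_ncard hfin).mp h2
    obtain ⟨σ, hσ⟩ := exists_isSmallestCanSq hPU hx hy hxy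
    have hσeq : smallestCanSq P = σ := smallestCanSq_eq hσ
    obtain ⟨a, haP, b, hbP, hab, hpair⟩ := exists_defining_pair hPU hx hy hxy hσ
    have hXeq : smallestCanSq {a, b} = σ := smallestCanSq_eq hpair
    refine ⟨{a, b}, ?_, ?_, Or.inr (Or.inl ⟨?_, ?_, ?_⟩)⟩
    · intro z hz; rcases hz with rfl | rfl
      · exact haP
      · exact hbP
    · rw [Set.ncard_pair hab]; norm_num
    · rw [Set.ncard_pair hab]
    · rw [hXeq, ← hσeq]; exact hne
    · rw [hXeq, ← hσeq]
  · obtain ⟨hσcan, q₁, q₂, hq₁, hq₂, hq12, ⟨p₁, hp₁P, hp₁q⟩, ⟨p₂, hp₂P, hp₂q⟩⟩ := hcrit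
    have hqU : q ⊆ unitSq := by
      obtain ⟨k, -, hqside, -⟩ := hq
      exact hqside.subset_unitSq
    rcases hsub with ⟨hle, hfq⟩ | ⟨h2, hneq, hfq⟩
    · -- tile is the quadrant q itself
      refine ⟨insert p₁ (insert p₂ (P ∩ q)), ?_, ?_, Or.inr (Or.inr ⟨σ, q,
        ⟨hσcan, q₁, q₂, hq₁, hq₂, hq12, ⟨p₁, Set.mem_insert _ _, hp₁q⟩,
          ⟨p₂, Set.mem_insert_of_mem _ (Set.mem_insert _ _), hp₂q⟩⟩, hq,
        Or.inl ⟨?_, hfq⟩⟩)⟩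
      · intro z hz
        rcases hz with rfl | rfl | hz
        · exact hp₁P
        · exact hp₂P
        · exact hz.1
      · calc (insert p₁ (insert p₂ (P ∩ q))).ncard
            ≤ (insert p₂ (P ∩ q)).ncard + 1 := Set.ncard_insert_le _ _
          _ ≤ ((P ∩ q).ncard + 1) + 1 := by
              have := Set.ncard_insert_le p₂ (P ∩ q); omega
          _ ≤ 4 := by omega
      · have hss : insert p₁ (insert p₂ (P ∩ q)) ∩ q ⊆ P ∩ q := by
          intro z ⟨hz1, hz2⟩
          rcases hz1 with rfl | rfl | hz1
          · exact ⟨hp₁P, hz2⟩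
          · exact ⟨hp₂P, hz2⟩
          · exact hz1
        exact le_trans (Set.ncard_le_ncard hss (hfin.inter_of_left q)) hle
    · -- tile is an annulus inside q
      have hPqfin : (P ∩ q).Finite := hfin.inter_of_left q
      have hPqU : P ∩ q ⊆ unitSq := fun z hz => hqU hz.2
      obtain ⟨x, hx, y, hy, hxy⟩ := (Set.one_lt_ncard hPqfin).mp h2
      obtain ⟨σ', hσ'⟩ := exists_isSmallestCanSq hPqU hx hy hxy
      have hσ'eq : smallestCanSq (P ∩ q) = σ' := smallestCanSq_eq hσ'
      obtain ⟨a, haPq, b, hbPq, hab, hpair⟩ := exists_defining_pair hPqU hx hy hxy hσ'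
      set X : Set (ℝ × ℝ) := insert p₁ (insert p₂ {a, b}) with hX
      have habX : {a, b} ⊆ X ∩ q := by
        intro z hz
        rcases hz with rfl | rfl
        · exact ⟨Set.mem_insert_of_mem _ (Set.mem_insert_of_mem _ (Set.mem_insert _ _)),
            haPq.2⟩
        · exact ⟨Set.mem_insert_of_mem _ (Set.mem_insert_of_mem _
            (Set.mem_insert_of_mem _ rfl)), hbPq.2⟩
      have hXP : X ⊆ P := by
        intro z hz
        rcases hz with rfl | rfl | rfl | rfl
        · exact hp₁P
        · exact hp₂P
        · exact haPq.1
        · exact hbPq.1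
      have hXqσ' : X ∩ q ⊆ σ' := by
        intro z hz
        exact hσ'.2.1 ⟨hXP hz.1, hz.2⟩
      have hsm : IsSmallestCanSq (X ∩ q) σ' := hpair.of_between habX hXqσ'
      have hsmeq : smallestCanSq (X ∩ q) = σ' := smallestCanSq_eq hsm
      refine ⟨X, hXP, ?_, Or.inr (Or.inr ⟨σ, q,
        ⟨hσcan, q₁, q₂, hq₁, hq₂, hq12, ⟨p₁, Set.mem_insert _ _, hp₁q⟩,
          ⟨p₂, Set.mem_insert_of_mem _ (Set.mem_insert _ _), hp₂q⟩⟩, hq,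
        Or.inr ⟨?_, ?_, ?_⟩⟩)⟩
      · calc X.ncard ≤ (insert p₂ ({a, b} : Set (ℝ × ℝ))).ncard + 1 :=
            Set.ncard_insert_le _ _
          _ ≤ (({a, b} : Set (ℝ × ℝ)).ncard + 1) + 1 := by
              have := Set.ncard_insert_le p₂ ({a, b} : Set (ℝ × ℝ)); omega
          _ ≤ 4 := by rw [Set.ncard_pair hab]
      · have hXfin : (X ∩ q).Finite := (hfin.subset hXP).inter_of_left q
        calc 2 = ({a, b} : Set (ℝ × ℝ)).ncard := (Set.ncard_pair hab).symm
          _ ≤ (X ∩ q).ncard := Set.ncard_le_ncard habX hXfin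
      · rw [hsmeq, ← hσ'eq]; exact hneq
      · rw [hsmeq, ← hσ'eq]; exact hfq
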